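/- arXiv:0901.0874 — 2 statements merged into one kernel-verified Lean document; each statement's English description precedes it below -/
import Mathlib

section
/- At the inphase equilibrium (r_t = 0, φ = 0, r_l = r), the Jacobian of the transverse (r_t, φ)-subsystem is J_in = [[u + 6r² − 5r⁴ − κ₁, κ₂ r], [2σ r_m² r − 2σ r³ − 4κ₂/r, −2κ₁]], with trace tr(J_in) = u + 6r² − 5r⁴ − 3κ₁ and determinant det(J_in) = −2(u + 6r² − 5r⁴)κ₁ − 2σ r²(r_m² − r²)κ₂ + 2κ₁² + 4κ₂². -/
/-- Right-hand side of the `r_t` equation of the fast constrained system. -/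
noncomputable def Frt (u κ₁ κ₂ rl rt φ : ℝ) : ℝ :=
  u * rt + 6 * rl ^ 2 * rt + 2 * rt ^ 3 - 5 * rl ^ 4 * rt - 10 * rl ^ 2 * rt ^ 3 - rt ^ 5
    - κ₁ * rt * Real.cos φ + κ₂ * rl * Real.sin φ

/-- Right-hand side of the `φ` equation of the fast constrained system. -/
noncomputable def Fphi (σ rm κ₁ κ₂ rl rt φ : ℝ) : ℝ :=
  2 * σ * rm ^ 2 * rl * rt - 2 * σ * rl * rt * (rl ^ 2 + rt ^ 2)
    - 2 * κ₁ * ((rl ^ 2 + rt ^ 2) / (rl ^ 2 - rt ^ 2)) * Real.sin φ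
    - 4 * κ₂ * (rl * rt / (rl ^ 2 - rt ^ 2)) * Real.cos φ

/-- Jacobian of the transverse `(r_t, φ)` subsystem at the inphase equilibrium, together
with its trace and determinant. -/
theorem stmt_8 (u σ rm κ₁ κ₂ r : ℝ) (hr : 0 < r)
    (hu : u = r ^ 4 - 2 * r ^ 2 - 2 * κ₁) :
    HasDerivAt (fun rt => Frt u κ₁ κ₂ r rt 0) (u + 6 * r ^ 2 - 5 * r ^ 4 - κ₁) 0 ∧
    HasDerivAt (fun φ => Frt u κ₁ κ₂ r 0 φ) (κ₂ * r) 0 ∧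
    HasDerivAt (fun rt => Fphi σ rm κ₁ κ₂ r rt 0)
      (2 * σ * rm ^ 2 * r - 2 * σ * r ^ 3 - 4 * κ₂ / r) 0 ∧
    HasDerivAt (fun φ => Fphi σ rm κ₁ κ₂ r 0 φ) (-2 * κ₁) 0 ∧
    (u + 6 * r ^ 2 - 5 * r ^ 4 - κ₁) + (-2 * κ₁) = u + 6 * r ^ 2 - 5 * r ^ 4 - 3 * κ₁ ∧
    (u + 6 * r ^ 2 - 5 * r ^ 4 - κ₁) * (-2 * κ₁)
        - (κ₂ * r) * (2 * σ * rm ^ 2 * r - 2 * σ * r ^ 3 - 4 * κ₂ / r)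
      = -2 * (u + 6 * r ^ 2 - 5 * r ^ 4) * κ₁ - 2 * σ * r ^ 2 * (rm ^ 2 - r ^ 2) * κ₂
        + 2 * κ₁ ^ 2 + 4 * κ₂ ^ 2 := by
  have hrne : r ≠ 0 := hr.ne'
  have hid : HasDerivAt (fun x : ℝ => x) 1 0 := hasDerivAt_id 0
  have h3' : HasDerivAt (fun x : ℝ => x ^ 3) (3 * 0 ^ 2) 0 := hasDerivAt_pow 3 0
  have h5' : HasDerivAt (fun x : ℝ => x ^ 5) (5 * 0 ^ 4) 0 := hasDerivAt_pow 5 0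
  refine ⟨?_, ?_, ?_, ?_, by ring, by field_simp; ring⟩
  · have heq : (fun rt => Frt u κ₁ κ₂ r rt 0)
        = fun rt : ℝ => u * rt + 6 * r ^ 2 * rt + 2 * rt ^ 3 - 5 * r ^ 4 * rt
            - 10 * r ^ 2 * rt ^ 3 - rt ^ 5 - κ₁ * rt := by
      funext rt; simp [Frt]
    rw [heq]
    have := ((((((hid.const_mul u).fun_add (hid.const_mul (6 * r ^ 2))).fun_add
        (h3'.const_mul 2)).fun_sub (hid.const_mul (5 * r ^ 4))).fun_sub
        (h3'.const_mul (10 * r ^ 2))).fun_sub h5').fun_sub (hid.const_mul κ₁)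
    refine this.congr_deriv ?_; ring
  · have heq : (fun φ => Frt u κ₁ κ₂ r 0 φ) = fun φ : ℝ => κ₂ * r * Real.sin φ := by
      funext φ; simp [Frt]
    rw [heq]
    have := (Real.hasDerivAt_sin 0).const_mul (κ₂ * r)
    simpa using this
  · have heq : (fun rt => Fphi σ rm κ₁ κ₂ r rt 0)
        = fun rt : ℝ => 2 * σ * rm ^ 2 * r * rt - 2 * σ * r * rt * (r ^ 2 + rt ^ 2)
            - 4 * κ₂ * (r * rt / (r ^ 2 - rt ^ 2)) := by
      funext rt; simp [Fphi]
    rw [heq]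
    have hnum : HasDerivAt (fun rt : ℝ => r * rt) r 0 := by
      simpa using hid.const_mul r
    have hden : HasDerivAt (fun rt : ℝ => r ^ 2 - rt ^ 2) (-(2 * 0)) 0 := by
      simpa using (hasDerivAt_const (0:ℝ) (r ^ 2)).fun_sub (hasDerivAt_pow 2 0)
    have hdiv := hnum.fun_div hden (by simpa using pow_ne_zero 2 hrne)
    have hprod : HasDerivAt (fun rt : ℝ => 2 * σ * r * rt * (r ^ 2 + rt ^ 2))
        (2 * σ * r * (r ^ 2 + 0 ^ 2) + 2 * σ * r * 0 * (2 * 0)) 0 := by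
      have := (hid.const_mul (2 * σ * r)).fun_mul
        ((hasDerivAt_const (0:ℝ) (r ^ 2)).fun_add (hasDerivAt_pow 2 0))
      refine this.congr_deriv ?_
      push_cast; ring
    have := ((hid.const_mul (2 * σ * rm ^ 2 * r)).fun_sub hprod).fun_sub (hdiv.const_mul (4 * κ₂))
    refine this.congr_deriv ?_
    field_simp
    ring
  · have heq : (fun φ => Fphi σ rm κ₁ κ₂ r 0 φ) = fun φ : ℝ => -(2 * κ₁) * Real.sin φ := by
      funext φ
      simp [Fphi, div_self (pow_ne_zero 2 hrne)]
    rw [heq]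
    have := (Real.hasDerivAt_sin 0).const_mul (-(2 * κ₁))
    simpa using this
end

section
/- At the antiphase equilibrium (r_t = 0, φ = π, r_l = r with u = r⁴ − 2r² + 2κ₁), the Jacobian of the transverse (r_t, φ)-subsystem is J_anti = [[u + 6r² − 5r⁴ + κ₁, −κ₂ r], [2σ r_m² r − 2σ r³ + 4κ₂/r, 2κ₁]], with tr(J_anti) = u + 6r² − 5r⁴ + 3κ₁ and det(J_anti) = 2(u + 6r² − 5r⁴)κ₁ + 2σ r²(r_m² − r²)κ₂ + 2κ₁² + 4κ₂². -/
/-- Jacobian of the transverse `(r_t, φ)` subsystem at the antiphase equilibrium, together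
with its trace and determinant. -/
theorem stmt_9 (u σ rm κ₁ κ₂ r : ℝ) (hr : 0 < r)
    (hu : u = r ^ 4 - 2 * r ^ 2 + 2 * κ₁) :
    HasDerivAt (fun rt => Frt u κ₁ κ₂ r rt Real.pi) (u + 6 * r ^ 2 - 5 * r ^ 4 + κ₁) 0 ∧
    HasDerivAt (fun φ => Frt u κ₁ κ₂ r 0 φ) (-(κ₂ * r)) Real.pi ∧
    HasDerivAt (fun rt => Fphi σ rm κ₁ κ₂ r rt Real.pi)
      (2 * σ * rm ^ 2 * r - 2 * σ * r ^ 3 + 4 * κ₂ / r) 0 ∧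
    HasDerivAt (fun φ => Fphi σ rm κ₁ κ₂ r 0 φ) (2 * κ₁) Real.pi ∧
    (u + 6 * r ^ 2 - 5 * r ^ 4 + κ₁) + 2 * κ₁ = u + 6 * r ^ 2 - 5 * r ^ 4 + 3 * κ₁ ∧
    (u + 6 * r ^ 2 - 5 * r ^ 4 + κ₁) * (2 * κ₁)
        - (-(κ₂ * r)) * (2 * σ * rm ^ 2 * r - 2 * σ * r ^ 3 + 4 * κ₂ / r)
      = 2 * (u + 6 * r ^ 2 - 5 * r ^ 4) * κ₁ + 2 * σ * r ^ 2 * (rm ^ 2 - r ^ 2) * κ₂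
        + 2 * κ₁ ^ 2 + 4 * κ₂ ^ 2 := by
  have hr0 : r ≠ 0 := ne_of_gt hr
  have hr2 : r ^ 2 ≠ 0 := pow_ne_zero 2 hr0
  have hx : HasDerivAt (fun x : ℝ => x) 1 0 := hasDerivAt_id 0
  have hx3 : HasDerivAt (fun x : ℝ => x ^ 3) 0 0 := by
    simpa using hasDerivAt_pow 3 (0 : ℝ)
  have hx5 : HasDerivAt (fun x : ℝ => x ^ 5) 0 0 := by
    simpa using hasDerivAt_pow 5 (0 : ℝ)
  refine ⟨?_, ?_, ?_, ?_, by ring, by field_simp; ring⟩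
  · -- d/drt Frt at 0
    have h : HasDerivAt
        (fun x : ℝ => u * x + 6 * r ^ 2 * x + 2 * x ^ 3 - 5 * r ^ 4 * x
          - 10 * r ^ 2 * x ^ 3 - x ^ 5 + κ₁ * x)
        (u + 6 * r ^ 2 - 5 * r ^ 4 + κ₁) 0 := by
      have := ((((((hx.const_mul u).add (hx.const_mul (6 * r ^ 2))).add
        (hx3.const_mul 2)).sub (hx.const_mul (5 * r ^ 4))).sub
        (hx3.const_mul (10 * r ^ 2))).sub hx5).add (hx.const_mul κ₁)
      refine this.congr_deriv ?_
      norm_num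
    have hfun : (fun rt => Frt u κ₁ κ₂ r rt Real.pi)
        = fun x : ℝ => u * x + 6 * r ^ 2 * x + 2 * x ^ 3 - 5 * r ^ 4 * x
          - 10 * r ^ 2 * x ^ 3 - x ^ 5 + κ₁ * x := by
      funext x
      simp [Frt]
    rw [hfun]; exact h
  · -- d/dφ Frt at rl = r, rt = 0
    have h : HasDerivAt (fun φ : ℝ => κ₂ * r * Real.sin φ) (-(κ₂ * r)) Real.pi := by
      simpa [Real.cos_pi] using (Real.hasDerivAt_sin Real.pi).const_mul (κ₂ * r)
    have hfun : (fun φ => Frt u κ₁ κ₂ r 0 φ) = fun φ : ℝ => κ₂ * r * Real.sin φ := by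
      funext φ
      simp [Frt]
    rw [hfun]; exact h
  · -- d/drt Fphi at 0
    have hnum : HasDerivAt (fun x : ℝ => r * x) r 0 := by
      simpa using hx.const_mul r
    have hden : HasDerivAt (fun x : ℝ => r ^ 2 - x ^ 2) 0 0 := by
      simpa using (hasDerivAt_pow 2 (0:ℝ)).const_sub (r ^ 2)
    have hdiv : HasDerivAt (fun x : ℝ => r * x / (r ^ 2 - x ^ 2)) (1 / r) 0 := by
      have := hnum.div hden (by simpa using hr2)
      refine this.congr_deriv ?_
      field_simp
      ring
    have h : HasDerivAt
        (fun x : ℝ => 2 * σ * rm ^ 2 * r * x - 2 * σ * r * x * (r ^ 2 + x ^ 2)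
          + 4 * κ₂ * (r * x / (r ^ 2 - x ^ 2)))
        (2 * σ * rm ^ 2 * r - 2 * σ * r ^ 3 + 4 * κ₂ / r) 0 := by
      have h1 : HasDerivAt (fun x : ℝ => 2 * σ * r * x) (2 * σ * r * 1) 0 :=
        hx.const_mul (2 * σ * r)
      have h2 : HasDerivAt (fun x : ℝ => r ^ 2 + x ^ 2) 0 0 := by
        simpa using (hasDerivAt_pow 2 (0:ℝ)).const_add (r ^ 2)
      have := ((hx.const_mul (2 * σ * rm ^ 2 * r)).sub (h1.mul h2)).add
        (hdiv.const_mul (4 * κ₂))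
      refine this.congr_deriv ?_
      rw [mul_one_div]
      ring
    have hfun : (fun rt => Fphi σ rm κ₁ κ₂ r rt Real.pi)
        = fun x : ℝ => 2 * σ * rm ^ 2 * r * x - 2 * σ * r * x * (r ^ 2 + x ^ 2)
          + 4 * κ₂ * (r * x / (r ^ 2 - x ^ 2)) := by
      funext x
      simp only [Fphi, Real.sin_pi, Real.cos_pi]
      ring
    rw [hfun]; exact h
  · -- d/dφ Fphi at rt = 0
    have h : HasDerivAt (fun φ : ℝ => -(2 * κ₁) * Real.sin φ) (2 * κ₁) Real.pi := by
      simpa [Real.cos_pi] using (Real.hasDerivAt_sin Real.pi).const_mul (-(2 * κ₁))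
    have hfun : (fun φ => Fphi σ rm κ₁ κ₂ r 0 φ)
        = fun φ : ℝ => -(2 * κ₁) * Real.sin φ := by
      funext φ
      simp [Fphi, hr2]
    rw [hfun]; exact h
end
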